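/- Let n ≥ 2 be an integer and let A be a finite-valued Young function with A(t) > 0 for t > 0, satisfying ∫₀ (τ/A(τ))^{1/(n−1)} dτ < ∞ near zero and ∫^∞ (τ/A(τ))^{1/(n−1)} dτ = ∞. If A satisfies the ∇₂-condition globally, then the Sobolev trace conjugate A_T also satisfies the ∇₂-condition globally. -/

import Mathlib

open MeasureTheory Set Filter
open scoped ENNReal

/-- A finite-valued Young function: convex, vanishing at `0`, nonnegative on `[0,∞)`,
and not identically zero there. -/
structure IsYoung (A : ℝ → ℝ) : Prop where
  zero : A 0 = 0
  nonneg : ∀ t, 0 ≤ t → 0 ≤ A t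
  convex : ConvexOn ℝ (Set.Ici 0) A
  nontrivial : ∃ t, 0 < t ∧ 0 < A t

/-- `H_n(t) = ( ∫₀^t (τ/A(τ))^{1/(n−1)} dτ )^{1/n′}`, where `n′ = n/(n−1)`. -/
noncomputable def Hn (A : ℝ → ℝ) (n : ℕ) (t : ℝ) : ℝ :=
  ((∫⁻ τ in Set.Ioc (0:ℝ) t,
      ENNReal.ofReal ((τ / A τ) ^ (1/((n:ℝ)-1)))).toReal) ^ (((n:ℝ)-1)/n)

/-- The inverse of `H_n` (as a generalized inverse). -/
noncomputable def HnInv (A : ℝ → ℝ) (n : ℕ) (t : ℝ) : ℝ :=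
  sInf {s : ℝ | 0 ≤ s ∧ t ≤ Hn A n s}

/-- The Sobolev trace conjugate `A_T(t) = ∫₀^t A(H_n⁻¹(τ))/H_n⁻¹(τ) dτ`. -/
noncomputable def AT (A : ℝ → ℝ) (n : ℕ) (t : ℝ) : ℝ :=
  ∫ τ in Set.Ioc (0:ℝ) t, A (HnInv A n τ) / HnInv A n τ

/-- `∫₀ (τ/A(τ))^{1/(n−1)} dτ < ∞` near zero. -/
def ConvNearZero (A : ℝ → ℝ) (n : ℕ) : Prop :=
  ∃ δ > (0:ℝ), (∫⁻ τ in Set.Ioc (0:ℝ) δ,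
    ENNReal.ofReal ((τ / A τ) ^ (1/((n:ℝ)-1)))) < ⊤

/-- `∫^∞ (τ/A(τ))^{1/(n−1)} dτ = ∞`. -/
def DivNearInfty (A : ℝ → ℝ) (n : ℕ) : Prop :=
  (∫⁻ τ in Set.Ioi (1:ℝ), ENNReal.ofReal ((τ / A τ) ^ (1/((n:ℝ)-1)))) = ⊤

/-- `A` satisfies the `∇₂`-condition globally. -/
def Nabla2Global (A : ℝ → ℝ) : Prop :=
  ∃ c > (2:ℝ), ∀ t ≥ (0:ℝ), c * A t ≤ A (2 * t)

namespace ATNabla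

variable {A : ℝ → ℝ} {n : ℕ}

/-- slope monotonicity for a Young function -/
lemma slope_mono (hA : IsYoung A) {a b : ℝ} (ha : 0 < a) (hab : a ≤ b) :
    A a / a ≤ A b / b := by
  have hb : 0 < b := lt_of_lt_of_le ha hab
  have hθ0 : 0 ≤ a / b := by positivity
  have hθ1 : a / b ≤ 1 := (div_le_one hb).2 hab
  have key := hA.convex.2 (self_mem_Ici (a := (0:ℝ))) (mem_Ici.2 hb.le)
    (by linarith : (0:ℝ) ≤ 1 - a/b) hθ0 (by ring)
  have hxa : (1 - a/b) • (0:ℝ) + (a/b) • b = a := by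
    rw [smul_zero, zero_add, smul_eq_mul, div_mul_cancel₀ a hb.ne']
  rw [hxa] at key
  have key2 : A a ≤ (a/b) * A b := by
    rw [hA.zero] at key
    simpa using key
  rw [div_le_div_iff₀ ha hb]
  have := mul_le_mul_of_nonneg_right key2 hb.le
  calc A a * b ≤ a / b * A b * b := this
    _ = A b * a := by field_simp

noncomputable def phi (A : ℝ → ℝ) (n : ℕ) (τ : ℝ) : ℝ := (τ / A τ) ^ (1/((n:ℝ)-1))

lemma n_facts (hn : 2 ≤ n) : (0:ℝ) < 1/((n:ℝ)-1) ∧ (0:ℝ) < ((n:ℝ)-1)/n ∧ ((n:ℝ)-1)/n ≤ 1 := by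
  have h2 : (2:ℝ) ≤ (n:ℝ) := by exact_mod_cast hn
  have h1 : (0:ℝ) < (n:ℝ) - 1 := by linarith
  have h0 : (0:ℝ) < (n:ℝ) := by linarith
  exact ⟨div_pos one_pos h1, div_pos h1 h0, by rw [div_le_one h0]; linarith⟩

lemma phi_pos (hApos : ∀ t > (0:ℝ), 0 < A t) {τ : ℝ} (hτ : 0 < τ) :
    0 < phi A n τ :=
  Real.rpow_pos_of_pos (div_pos hτ (hApos τ hτ)) _

lemma phi_anti (hn : 2 ≤ n) (hA : IsYoung A) (hApos : ∀ t > (0:ℝ), 0 < A t)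
    {a b : ℝ} (ha : 0 < a) (hab : a ≤ b) : phi A n b ≤ phi A n a := by
  have hb : 0 < b := lt_of_lt_of_le ha hab
  have hqa : 0 < A a := hApos a ha
  have hqb : 0 < A b := hApos b hb
  have hslope := slope_mono hA ha hab
  have hdiv : b / A b ≤ a / A a := by
    rw [div_le_div_iff₀ hqb hqa]
    rw [div_le_div_iff₀ ha hb] at hslope
    nlinarith
  exact Real.rpow_le_rpow (by positivity) hdiv (n_facts hn).1.le

noncomputable def fb (A : ℝ → ℝ) (n : ℕ) : ℝ → ℝ≥0∞ :=
  (Set.Ioi 0).indicator (fun τ => ENNReal.ofReal (phi A n τ))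

lemma fb_measurable (hn : 2 ≤ n) (hA : IsYoung A) (hApos : ∀ t > (0:ℝ), 0 < A t) :
    Measurable (fb A n) := by
  set m : ℕ → ℝ → ℝ≥0∞ := fun k => (Set.Ioi (((k:ℝ)+1)⁻¹)).indicator
      (fun τ => ENNReal.ofReal (phi A n (max τ (((k:ℝ)+1)⁻¹)))) with hm
  have hmk : ∀ k, Measurable (m k) := by
    intro k
    refine Measurable.indicator ?_ measurableSet_Ioi
    have hanti : Antitone (fun τ => ENNReal.ofReal (phi A n (max τ (((k:ℝ)+1)⁻¹)))) := by
      intro x y hxy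
      exact ENNReal.ofReal_le_ofReal (phi_anti hn hA hApos
        (lt_of_lt_of_le (by positivity) (le_max_right _ _)) (max_le_max hxy le_rfl))
    exact hanti.measurable
  have hrep : fb A n = fun τ => ⨆ k : ℕ, m k τ := by
    funext τ
    have hεpos : ∀ k : ℕ, (0:ℝ) < ((k:ℝ)+1)⁻¹ := fun k => by positivity
    by_cases hτ : 0 < τ
    · rw [fb, Set.indicator_of_mem (show τ ∈ Ioi (0:ℝ) from hτ)]
      apply le_antisymm
      · obtain ⟨k, hk⟩ := exists_nat_one_div_lt hτ
        rw [one_div] at hk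
        refine le_iSup_of_le k (le_of_eq ?_)
        rw [hm]
        simp only
        rw [Set.indicator_of_mem (show τ ∈ Ioi (((k:ℝ)+1)⁻¹) from hk),
          max_eq_left hk.le]
      · refine iSup_le fun k => ?_
        rw [hm]
        simp only
        by_cases hmem : τ ∈ Ioi (((k:ℝ)+1)⁻¹)
        · rw [Set.indicator_of_mem hmem, max_eq_left (le_of_lt hmem)]
        · rw [Set.indicator_of_notMem hmem]; exact bot_le
    · have h1 : τ ∉ Ioi (0:ℝ) := hτ
      rw [fb, Set.indicator_of_notMem h1]
      symm
      refine ENNReal.iSup_eq_zero.2 fun k => ?_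
      have hnm : τ ∉ Ioi (((k:ℝ)+1)⁻¹) := by
        simp only [mem_Ioi, not_lt] at *
        linarith [hεpos k, h1]
      rw [hm]
      simp only
      rw [Set.indicator_of_notMem hnm]
  rw [hrep]
  exact Measurable.iSup hmk

noncomputable def nu (A : ℝ → ℝ) (n : ℕ) : Measure ℝ := volume.withDensity (fb A n)

lemma lintegral_fb {s : Set ℝ} (hs : MeasurableSet s) (hsub : s ⊆ Ioi 0) :
    (∫⁻ τ in s, ENNReal.ofReal ((τ / A τ) ^ (1/((n:ℝ)-1)))) = nu A n s := by
  rw [nu, withDensity_apply _ hs]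
  refine setLIntegral_congr_fun hs (fun x hx => ?_)
  rw [fb, Set.indicator_of_mem (hsub hx)]
  rfl

lemma nu_Ioc (t : ℝ) :
    (∫⁻ τ in Set.Ioc (0:ℝ) t, ENNReal.ofReal ((τ / A τ) ^ (1/((n:ℝ)-1)))) =
      nu A n (Ioc 0 t) :=
  lintegral_fb measurableSet_Ioc Ioc_subset_Ioi_self

lemma nu_bound_above (hn : 2 ≤ n) (hA : IsYoung A) (hApos : ∀ t > (0:ℝ), 0 < A t)
    {a b : ℝ} (ha : 0 < a) :
    nu A n (Ioc a b) ≤ ENNReal.ofReal (phi A n a) * ENNReal.ofReal (b - a) := by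
  rw [nu, withDensity_apply _ measurableSet_Ioc]
  calc ∫⁻ τ in Ioc a b, fb A n τ
      ≤ ∫⁻ _ in Ioc a b, ENNReal.ofReal (phi A n a) := by
        refine setLIntegral_mono' measurableSet_Ioc fun x hx => ?_
        rw [fb, Set.indicator_of_mem (show x ∈ Ioi (0:ℝ) from lt_trans ha hx.1)]
        exact ENNReal.ofReal_le_ofReal (phi_anti hn hA hApos ha hx.1.le)
    _ = ENNReal.ofReal (phi A n a) * ENNReal.ofReal (b - a) := by
        rw [setLIntegral_const, Real.volume_Ioc]

lemma nu_bound_below (hn : 2 ≤ n) (hA : IsYoung A) (hApos : ∀ t > (0:ℝ), 0 < A t)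
    {a : ℝ} (ha : 0 < a) :
    ENNReal.ofReal (phi A n a) * ENNReal.ofReal a ≤ nu A n (Ioc 0 a) := by
  rw [nu, withDensity_apply _ measurableSet_Ioc]
  calc ENNReal.ofReal (phi A n a) * ENNReal.ofReal a
      = ∫⁻ _ in Ioc (0:ℝ) a, ENNReal.ofReal (phi A n a) := by
        rw [setLIntegral_const, Real.volume_Ioc, sub_zero]
    _ ≤ ∫⁻ τ in Ioc (0:ℝ) a, fb A n τ := by
        refine setLIntegral_mono' measurableSet_Ioc fun x hx => ?_
        rw [fb, Set.indicator_of_mem (show x ∈ Ioi (0:ℝ) from hx.1)]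
        exact ENNReal.ofReal_le_ofReal (phi_anti hn hA hApos hx.1 hx.2)

lemma nu_finite (hn : 2 ≤ n) (hA : IsYoung A) (hApos : ∀ t > (0:ℝ), 0 < A t)
    (hconv : ConvNearZero A n) (t : ℝ) : nu A n (Ioc 0 t) ≠ ⊤ := by
  obtain ⟨δ, hδ, hfin⟩ := hconv
  rw [nu_Ioc] at hfin
  by_cases ht : t ≤ δ
  · exact ne_top_of_le_ne_top hfin.ne (measure_mono (Ioc_subset_Ioc_right ht))
  · push_neg at ht
    have hsub : Ioc (0:ℝ) t ⊆ Ioc 0 δ ∪ Ioc δ t := by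
      rw [Set.Ioc_union_Ioc_eq_Ioc hδ.le ht.le]
    have h2 : nu A n (Ioc δ t) ≠ ⊤ :=
      ne_top_of_le_ne_top (ENNReal.mul_ne_top ENNReal.ofReal_ne_top ENNReal.ofReal_ne_top)
        (nu_bound_above hn hA hApos hδ)
    exact ne_top_of_le_ne_top (ENNReal.add_ne_top.2 ⟨hfin.ne, h2⟩)
      (le_trans (measure_mono hsub) (measure_union_le _ _))

noncomputable def Fr (A : ℝ → ℝ) (n : ℕ) (t : ℝ) : ℝ := (nu A n (Ioc 0 t)).toReal

lemma Hn_eq (t : ℝ) : Hn A n t = Fr A n t ^ (((n:ℝ)-1)/n) := by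
  rw [Hn, nu_Ioc, Fr]

lemma Fr_nonneg (t : ℝ) : 0 ≤ Fr A n t := ENNReal.toReal_nonneg

lemma Fr_mono (hn : 2 ≤ n) (hA : IsYoung A) (hApos : ∀ t > (0:ℝ), 0 < A t)
    (hconv : ConvNearZero A n) {a b : ℝ} (hab : a ≤ b) : Fr A n a ≤ Fr A n b :=
  ENNReal.toReal_mono (nu_finite hn hA hApos hconv b)
    (measure_mono (Ioc_subset_Ioc_right hab))

lemma Fr_doubling (hn : 2 ≤ n) (hA : IsYoung A) (hApos : ∀ t > (0:ℝ), 0 < A t)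
    (hconv : ConvNearZero A n) {s : ℝ} (hs : 0 ≤ s) :
    Fr A n (2*s) ≤ 2 * Fr A n s := by
  rcases eq_or_lt_of_le hs with h0 | hs'
  · rw [← h0]; norm_num [Fr]
  · have hunion : Ioc (0:ℝ) (2*s) = Ioc 0 s ∪ Ioc s (2*s) :=
      (Set.Ioc_union_Ioc_eq_Ioc hs (by linarith)).symm
    have key : nu A n (Ioc (0:ℝ) (2*s)) ≤ 2 * nu A n (Ioc 0 s) := by
      rw [hunion]
      refine le_trans (measure_union_le _ _) ?_
      have hmid : nu A n (Ioc s (2*s)) ≤ nu A n (Ioc 0 s) := by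
        refine le_trans (nu_bound_above hn hA hApos hs') ?_
        have h2 : (2*s - s) = s := by ring
        rw [h2]
        exact nu_bound_below hn hA hApos hs'
      rw [two_mul (nu A n (Ioc (0:ℝ) s))]
      exact add_le_add le_rfl hmid
    have hfin : nu A n (Ioc (0:ℝ) s) ≠ ⊤ := nu_finite hn hA hApos hconv s
    have := ENNReal.toReal_mono (by
      exact ENNReal.mul_ne_top (by norm_num) hfin) key
    rw [ENNReal.toReal_mul] at this
    simpa [Fr] using this

lemma Hn_nonneg (t : ℝ) : 0 ≤ Hn A n t := by
  rw [Hn_eq]; exact Real.rpow_nonneg (Fr_nonneg t) _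

lemma Hn_mono (hn : 2 ≤ n) (hA : IsYoung A) (hApos : ∀ t > (0:ℝ), 0 < A t)
    (hconv : ConvNearZero A n) {a b : ℝ} (hab : a ≤ b) : Hn A n a ≤ Hn A n b := by
  rw [Hn_eq, Hn_eq]
  exact Real.rpow_le_rpow (Fr_nonneg _) (Fr_mono hn hA hApos hconv hab)
    (n_facts hn).2.1.le

lemma Hn_half (hn : 2 ≤ n) (hA : IsYoung A) (hApos : ∀ t > (0:ℝ), 0 < A t)
    (hconv : ConvNearZero A n) {b : ℝ} (hb : 0 ≤ b) :
    Hn A n b ≤ 2 * Hn A n (b/2) := by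
  have hhalf : 0 ≤ b/2 := by linarith
  have h1 : Hn A n b = Fr A n (2*(b/2)) ^ (((n:ℝ)-1)/n) := by
    rw [Hn_eq, show (2:ℝ)*(b/2) = b by ring]
  rw [h1, Hn_eq]
  calc Fr A n (2*(b/2)) ^ (((n:ℝ)-1)/n)
      ≤ (2 * Fr A n (b/2)) ^ (((n:ℝ)-1)/n) :=
        Real.rpow_le_rpow (Fr_nonneg _) (Fr_doubling hn hA hApos hconv hhalf)
          (n_facts hn).2.1.le
    _ = 2 ^ (((n:ℝ)-1)/n) * Fr A n (b/2) ^ (((n:ℝ)-1)/n) :=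
        Real.mul_rpow (by norm_num) (Fr_nonneg _)
    _ ≤ 2 * Fr A n (b/2) ^ (((n:ℝ)-1)/n) := by
        refine mul_le_mul_of_nonneg_right ?_ (Real.rpow_nonneg (Fr_nonneg _) _)
        calc (2:ℝ) ^ (((n:ℝ)-1)/n) ≤ 2 ^ (1:ℝ) :=
            Real.rpow_le_rpow_of_exponent_le one_le_two (n_facts hn).2.2
          _ = 2 := Real.rpow_one 2

lemma Hn_large (hn : 2 ≤ n) (hA : IsYoung A) (hApos : ∀ t > (0:ℝ), 0 < A t)
    (hconv : ConvNearZero A n) (hdiv : DivNearInfty A n) (M : ℝ) :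
    ∃ t, 0 ≤ t ∧ M ≤ Hn A n t := by
  rcases le_or_gt M 0 with hM | hM
  · exact ⟨0, le_rfl, le_trans hM (Hn_nonneg 0)⟩
  · set e : ℝ := ((n:ℝ)-1)/n with he
    have hepos := (n_facts hn).2.1
    set K : ℝ := M ^ e⁻¹ with hK
    have hKpos : 0 < K := Real.rpow_pos_of_pos hM _
    have hdiv' : nu A n (Ioi 1) = ⊤ := by
      rw [← lintegral_fb measurableSet_Ioi
        (fun x hx => mem_Ioi.2 (lt_trans zero_lt_one hx))]
      exact hdiv
    have hmono : Monotone (fun k : ℕ => Ioc (1:ℝ) (k:ℝ)) := fun i j hij =>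
      Ioc_subset_Ioc_right (by exact_mod_cast hij)
    have hiU : (⋃ k : ℕ, Ioc (1:ℝ) (k:ℝ)) = Ioi 1 := by
      ext x
      simp only [mem_iUnion, mem_Ioc, mem_Ioi]
      constructor
      · rintro ⟨k, hk, _⟩; exact hk
      · intro hx
        obtain ⟨k, hk⟩ := exists_nat_ge x
        exact ⟨k, hx, hk⟩
    have htop : (⨆ k : ℕ, nu A n (Ioc (1:ℝ) (k:ℝ))) = ⊤ := by
      rw [← hmono.directed_le.measure_iUnion, hiU, hdiv']
    have hlt : ENNReal.ofReal K < ⨆ k : ℕ, nu A n (Ioc (1:ℝ) (k:ℝ)) := by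
      rw [htop]; exact ENNReal.ofReal_lt_top
    obtain ⟨k, hk⟩ := lt_iSup_iff.1 hlt
    refine ⟨(k:ℝ), Nat.cast_nonneg k, ?_⟩
    have h1 : ENNReal.ofReal K ≤ nu A n (Ioc (0:ℝ) (k:ℝ)) :=
      le_trans hk.le (measure_mono (Ioc_subset_Ioc_left zero_le_one))
    have h2 : K ≤ Fr A n (k:ℝ) :=
      (ENNReal.ofReal_le_iff_le_toReal (nu_finite hn hA hApos hconv _)).1 h1
    rw [Hn_eq]
    calc M = K ^ e := (Real.rpow_inv_rpow hM.le (ne_of_gt hepos)).symm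
      _ ≤ Fr A n (k:ℝ) ^ e := Real.rpow_le_rpow hKpos.le h2 hepos.le

lemma Hn_small (hn : 2 ≤ n) (hA : IsYoung A) (hApos : ∀ t > (0:ℝ), 0 < A t)
    (hconv : ConvNearZero A n) {τ : ℝ} (hτ : 0 < τ) :
    ∃ s, 0 < s ∧ Hn A n s < τ := by
  set e : ℝ := ((n:ℝ)-1)/n with he
  have hepos := (n_facts hn).2.1
  set K : ℝ := τ ^ e⁻¹ with hK
  have hKpos : 0 < K := Real.rpow_pos_of_pos hτ _
  obtain ⟨δ, hδ, _⟩ := id hconv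
  set s : ℕ → Set ℝ := fun k => Ioc (0:ℝ) (δ / ((k:ℝ)+1)) with hsdef
  have hanti : Antitone s := by
    intro i j hij
    refine Ioc_subset_Ioc_right ?_
    apply div_le_div_of_nonneg_left hδ.le (by positivity)
    have : (i:ℝ) ≤ (j:ℝ) := by exact_mod_cast hij
    linarith
  have hiI : (⋂ k, s k) = ∅ := by
    ext x
    simp only [mem_iInter, mem_Ioc, mem_empty_iff_false, iff_false, not_forall]
    by_contra hcon
    push_neg at hcon
    have hx0 : 0 < x := (hcon 0).1
    obtain ⟨k, hk⟩ := exists_nat_gt (δ / x)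
    have hxk := (hcon k).2
    have h1 : x * ((k:ℝ)+1) ≤ δ := by
      rw [← le_div_iff₀ (by positivity : (0:ℝ) < (k:ℝ)+1)]
      exact hxk
    have h2 : δ < (k:ℝ) * x := (div_lt_iff₀ hx0).1 hk
    nlinarith
  have htend : Tendsto (fun k => nu A n (s k)) atTop (nhds 0) := by
    have := tendsto_measure_iInter_atTop (μ := nu A n) (s := s)
      (fun k => measurableSet_Ioc.nullMeasurableSet) hanti
      ⟨0, nu_finite hn hA hApos hconv _⟩
    rwa [hiI, measure_empty] at this
  have hev := htend.eventually_lt_const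
    (show (0:ℝ≥0∞) < ENNReal.ofReal K from ENNReal.ofReal_pos.2 hKpos)
  obtain ⟨k, hk⟩ := hev.exists
  refine ⟨δ / ((k:ℝ)+1), by positivity, ?_⟩
  have hFr : Fr A n (δ / ((k:ℝ)+1)) < K := ENNReal.toReal_lt_of_lt_ofReal hk
  rw [Hn_eq]
  calc Fr A n (δ / ((k:ℝ)+1)) ^ e < K ^ e :=
      Real.rpow_lt_rpow (Fr_nonneg _) hFr hepos
    _ = τ := Real.rpow_inv_rpow hτ.le (ne_of_gt hepos)

/-! ### Properties of the generalized inverse -/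

lemma Sset_nonempty (hn : 2 ≤ n) (hA : IsYoung A) (hApos : ∀ t > (0:ℝ), 0 < A t)
    (hconv : ConvNearZero A n) (hdiv : DivNearInfty A n) (τ : ℝ) :
    {s : ℝ | 0 ≤ s ∧ τ ≤ Hn A n s}.Nonempty := by
  obtain ⟨t, ht0, htM⟩ := Hn_large hn hA hApos hconv hdiv τ
  exact ⟨t, ht0, htM⟩

lemma Sset_bddBelow (τ : ℝ) : BddBelow {s : ℝ | 0 ≤ s ∧ τ ≤ Hn A n s} :=
  ⟨0, fun b hb => hb.1⟩

lemma HnInv_nonneg (hn : 2 ≤ n) (hA : IsYoung A) (hApos : ∀ t > (0:ℝ), 0 < A t)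
    (hconv : ConvNearZero A n) (hdiv : DivNearInfty A n) (τ : ℝ) :
    0 ≤ HnInv A n τ :=
  le_csInf (Sset_nonempty hn hA hApos hconv hdiv τ) fun b hb => hb.1

lemma HnInv_mono (hn : 2 ≤ n) (hA : IsYoung A) (hApos : ∀ t > (0:ℝ), 0 < A t)
    (hconv : ConvNearZero A n) (hdiv : DivNearInfty A n) {τ₁ τ₂ : ℝ} (h : τ₁ ≤ τ₂) :
    HnInv A n τ₁ ≤ HnInv A n τ₂ :=
  csInf_le_csInf (Sset_bddBelow τ₁) (Sset_nonempty hn hA hApos hconv hdiv τ₂)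
    (fun b hb => ⟨hb.1, le_trans h hb.2⟩)

lemma HnInv_pos (hn : 2 ≤ n) (hA : IsYoung A) (hApos : ∀ t > (0:ℝ), 0 < A t)
    (hconv : ConvNearZero A n) (hdiv : DivNearInfty A n) {τ : ℝ} (hτ : 0 < τ) :
    0 < HnInv A n τ := by
  obtain ⟨s₀, hs₀, hHs₀⟩ := Hn_small hn hA hApos hconv hτ
  have : s₀ ≤ HnInv A n τ := by
    refine le_csInf (Sset_nonempty hn hA hApos hconv hdiv τ) fun b hb => ?_
    by_contra hbs
    push_neg at hbs
    have : Hn A n b ≤ Hn A n s₀ := Hn_mono hn hA hApos hconv hbs.le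
    linarith [hb.2]
  linarith

lemma HnInv_of_nonpos (hn : 2 ≤ n) (hA : IsYoung A) (hApos : ∀ t > (0:ℝ), 0 < A t)
    (hconv : ConvNearZero A n) (hdiv : DivNearInfty A n) {τ : ℝ} (hτ : τ ≤ 0) :
    HnInv A n τ = 0 := by
  refine le_antisymm ?_ (HnInv_nonneg hn hA hApos hconv hdiv τ)
  exact csInf_le (Sset_bddBelow τ) ⟨le_rfl, le_trans hτ (Hn_nonneg 0)⟩

lemma HnInv_double (hn : 2 ≤ n) (hA : IsYoung A) (hApos : ∀ t > (0:ℝ), 0 < A t)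
    (hconv : ConvNearZero A n) (hdiv : DivNearInfty A n) (τ : ℝ) :
    2 * HnInv A n τ ≤ HnInv A n (2*τ) := by
  refine le_csInf (Sset_nonempty hn hA hApos hconv hdiv (2*τ)) fun b hb => ?_
  have hb2 : τ ≤ Hn A n (b/2) := by
    have := Hn_half hn hA hApos hconv hb.1
    linarith [hb.2]
  have h1 : HnInv A n τ ≤ b/2 :=
    csInf_le (Sset_bddBelow τ) ⟨by linarith [hb.1], hb2⟩
  linarith

/-! ### The integrand of `AT` -/

lemma g_mono (hn : 2 ≤ n) (hA : IsYoung A) (hApos : ∀ t > (0:ℝ), 0 < A t)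
    (hconv : ConvNearZero A n) (hdiv : DivNearInfty A n) :
    Monotone (fun τ => A (HnInv A n τ) / HnInv A n τ) := by
  intro x y hxy
  by_cases hx : 0 < x
  · exact slope_mono hA (HnInv_pos hn hA hApos hconv hdiv hx)
      (HnInv_mono hn hA hApos hconv hdiv hxy)
  · push_neg at hx
    simp only
    rw [HnInv_of_nonpos hn hA hApos hconv hdiv hx, hA.zero]
    simp only [zero_div]
    exact div_nonneg (hA.nonneg _ (HnInv_nonneg hn hA hApos hconv hdiv y))
      (HnInv_nonneg hn hA hApos hconv hdiv y)

lemma g_key (hn : 2 ≤ n) (hA : IsYoung A) (hApos : ∀ t > (0:ℝ), 0 < A t)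
    (hconv : ConvNearZero A n) (hdiv : DivNearInfty A n)
    {c : ℝ} (hcA : ∀ t ≥ (0:ℝ), c * A t ≤ A (2 * t)) {τ : ℝ} (hτ : 0 < τ) :
    c / 2 * (A (HnInv A n τ) / HnInv A n τ) ≤
      A (HnInv A n (2*τ)) / HnInv A n (2*τ) := by
  set u := HnInv A n τ with hu
  set v := HnInv A n (2*τ) with hv
  have hupos : 0 < u := HnInv_pos hn hA hApos hconv hdiv hτ
  have h2u : 2 * u ≤ v := HnInv_double hn hA hApos hconv hdiv τ
  have hslope : A (2*u) / (2*u) ≤ A v / v :=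
    slope_mono hA (by linarith) h2u
  have hcAu : c * A u ≤ A (2*u) := hcA u hupos.le
  have h1 : c / 2 * (A u / u) = c * A u / (2*u) := div_mul_div_comm c 2 (A u) u
  rw [h1]
  refine le_trans ?_ hslope
  exact div_le_div_of_nonneg_right hcAu (by linarith)

end ATNabla

open ATNabla in
theorem AT_nabla2 (n : ℕ) (hn : 2 ≤ n) (A : ℝ → ℝ) (hA : IsYoung A)
    (hApos : ∀ t > (0:ℝ), 0 < A t)
    (hconv : ConvNearZero A n) (hdiv : DivNearInfty A n)
    (hnabla : Nabla2Global A) :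
    Nabla2Global (AT A n) := by
  obtain ⟨c, hc, hcA⟩ := hnabla
  refine ⟨c, hc, fun t ht => ?_⟩
  set g : ℝ → ℝ := fun τ => A (HnInv A n τ) / HnInv A n τ with hg
  have gmono : Monotone g := g_mono hn hA hApos hconv hdiv
  rcases eq_or_lt_of_le ht with h0 | ht'
  · rw [← h0]
    simp [AT]
  · have hAT : ∀ b, 0 ≤ b → AT A n b = ∫ x in (0:ℝ)..b, g x := fun b hb =>
      (intervalIntegral.integral_of_le hb).symm
    have Iint : IntervalIntegrable g volume 0 t :=
      (gmono.monotoneOn _).intervalIntegrable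
    have gmono2 : Monotone (fun x => g (2*x)) :=
      gmono.comp (fun x y hxy => by dsimp only; linarith : Monotone (fun x : ℝ => 2*x))
    have Iint2 : IntervalIntegrable (fun x => g (2*x)) volume 0 t :=
      (gmono2.monotoneOn _).intervalIntegrable
    have hcomp : ∫ x in (0:ℝ)..t, g (2*x) = (2:ℝ)⁻¹ • ∫ x in (2*(0:ℝ))..(2*t), g x :=
      intervalIntegral.integral_comp_mul_left g two_ne_zero
    have hcomp' : ∫ x in (0:ℝ)..(2*t), g x = 2 * ∫ x in (0:ℝ)..t, g (2*x) := by
      rw [hcomp]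
      norm_num
      ring
    have hptwise : ∀ x ∈ Icc (0:ℝ) t, c/2 * g x ≤ g (2*x) := by
      intro x hx
      rcases eq_or_lt_of_le hx.1 with h0x | h0x
      · have : HnInv A n x = 0 := HnInv_of_nonpos hn hA hApos hconv hdiv (le_of_eq h0x.symm)
        have h2x : HnInv A n (2*x) = 0 := HnInv_of_nonpos hn hA hApos hconv hdiv
          (by rw [← h0x]; norm_num)
        simp [hg, this, h2x, hA.zero]
      · exact g_key hn hA hApos hconv hdiv hcA h0x
    have hmono : ∫ x in (0:ℝ)..t, c/2 * g x ≤ ∫ x in (0:ℝ)..t, g (2*x) :=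
      intervalIntegral.integral_mono_on ht (Iint.const_mul _) Iint2 hptwise
    have hconstmul : ∫ x in (0:ℝ)..t, c/2 * g x = c/2 * ∫ x in (0:ℝ)..t, g x :=
      intervalIntegral.integral_const_mul _ _
    have h2t : (0:ℝ) ≤ 2*t := by linarith
    rw [hAT t ht, hAT (2*t) h2t, hcomp']
    rw [hconstmul] at hmono
    linarith
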